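/- Assume C_2 > 0 and let L = lim_{n→∞} (1/n^d) · log C_n. Then for every n ≥ 1, (1/n^d) · (log C_{n+1} − q_d(n) · log |Σ|) ≤ L, where q_d(n) = (2^d − 1) · Σ_{k=0}^{d−1} (binom(d,k)/(2^d − 2^k)) · n^k. -/

import Mathlib

/-- A pattern `P` on the cube `[1,n]^d` (coordinates encoded by `Fin n`, where
`j : Fin n` represents the coordinate `j+1 ∈ [1,n]`) is locally admissible if no
two adjacent values form a forbidden pair. -/
def IsLocAdm {A : Type*} (d n : ℕ) (F : Fin d → Set (A × A))
    (P : (Fin d → Fin n) → A) : Prop :=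
  ∀ (x : Fin d → Fin n) (k : Fin d) (h : (x k : ℕ) + 1 < n),
    (P x, P (Function.update x k ⟨(x k : ℕ) + 1, h⟩)) ∉ F k

/-- `patCount d F n` is `C_n`, the number of locally admissible patterns on `[1,n]^d`. -/
noncomputable def patCount {A : Type*} [Fintype A] (d : ℕ) (F : Fin d → Set (A × A))
    (n : ℕ) : ℕ :=
  Nat.card {P : (Fin d → Fin n) → A // IsLocAdm d n F P}

/-- A configuration `x : ℤ^d → A` is globally admissible if no two adjacent values
form a forbidden pair. -/
def IsGlobAdm {A : Type*} (d : ℕ) (F : Fin d → Set (A × A))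
    (x : (Fin d → ℤ) → A) : Prop :=
  ∀ (v : Fin d → ℤ) (k : Fin d),
    (x v, x (Function.update v k (v k + 1))) ∉ F k

/-- The polynomial `q_d(m) = (2^d − 1) · Σ_{k=0}^{d−1} (binom(d,k)/(2^d − 2^k)) · m^k`,
as a real function. -/
noncomputable def qReal (d : ℕ) (m : ℝ) : ℝ :=
  (2 ^ d - 1) * ∑ k ∈ Finset.range d, (d.choose k : ℝ) / (2 ^ d - 2 ^ k) * m ^ k


lemma patCount_pos {A : Type*} [Fintype A] (d : ℕ) (F : Fin d → Set (A × A))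
    (hF : ∀ (i : Fin d) (a b : A), (a, b) ∈ F i ↔ (b, a) ∈ F i)
    (h2 : 0 < patCount d F 2) (n : ℕ) : 0 < patCount d F n := by
  rw [patCount, Nat.card_pos_iff] at h2 ⊢
  refine ⟨?_, Set.toFinite _⟩
  obtain ⟨⟨P2, hP2⟩, -⟩ := h2
  refine ⟨⟨fun x => P2 (fun i => ⟨(x i : ℕ) % 2, Nat.mod_lt _ two_pos⟩), ?_⟩⟩
  intro x k h
  set y : Fin d → Fin 2 := fun i => ⟨(x i : ℕ) % 2, Nat.mod_lt _ two_pos⟩ with hy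
  have hyk : (y k : ℕ) = (x k : ℕ) % 2 := rfl
  have hupd : (fun i => (⟨((Function.update x k ⟨(x k : ℕ) + 1, h⟩ : Fin d → Fin n) i : ℕ) % 2, Nat.mod_lt _ two_pos⟩ : Fin 2))
      = Function.update y k ⟨((x k : ℕ) + 1) % 2, Nat.mod_lt _ two_pos⟩ := by
    funext i
    rcases eq_or_ne i k with rfl | hik
    · simp
    · simp [Function.update_of_ne hik, hy]
  show (P2 y, P2 (fun i => ⟨((Function.update x k ⟨(x k : ℕ) + 1, h⟩ : Fin d → Fin n) i : ℕ) % 2, Nat.mod_lt _ two_pos⟩)) ∉ F k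
  rw [hupd]
  rcases Nat.mod_two_eq_zero_or_one (x k : ℕ) with h0 | h1
  · have h01 : ((x k : ℕ) + 1) % 2 = 1 := by omega
    have hlt : (y k : ℕ) + 1 < 2 := by rw [hyk]; omega
    have e1 : (⟨((x k : ℕ) + 1) % 2, Nat.mod_lt _ two_pos⟩ : Fin 2) = ⟨(y k : ℕ) + 1, hlt⟩ := by
      ext; simp [hyk, h0, h01]
    rw [e1]
    exact hP2 y k hlt
  · set z : Fin d → Fin 2 := Function.update y k ⟨((x k : ℕ) + 1) % 2, Nat.mod_lt _ two_pos⟩ with hz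
    have hzk : (z k : ℕ) = ((x k : ℕ) + 1) % 2 := by simp [hz]
    have hlt : (z k : ℕ) + 1 < 2 := by omega
    have hyz : y = Function.update z k ⟨(z k : ℕ) + 1, hlt⟩ := by
      funext i
      rcases eq_or_ne i k with rfl | hik
      · rw [Function.update_self]
        ext
        simp only [hyk, hzk]
        omega
      · rw [Function.update_of_ne hik, hz, Function.update_of_ne hik]
    intro hmem
    rw [hF] at hmem
    rw [hyz] at hmem
    exact hP2 z k hlt hmem

/-- fold `[0, 2N-2]` onto `[0, N-1]` by reflection at `N-1`. -/
def foldPt (N : ℕ) {d : ℕ} (x : Fin d → Fin (2*N-1)) : Fin d → Fin N :=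
  fun i => if h : (x i : ℕ) < N then ⟨x i, h⟩
    else ⟨2*N-2-(x i : ℕ), by have := (x i).isLt; omega⟩

def epsPt (N : ℕ) {d : ℕ} (x : Fin d → Fin (2*N-1)) : Fin d → Bool :=
  fun i => decide (N ≤ (x i : ℕ))

def embedPt (N : ℕ) {d : ℕ} (ε : Fin d → Bool) (y : Fin d → Fin N) :
    Fin d → Fin (2*N-1) :=
  fun i => if ε i then ⟨2*N-2-(y i : ℕ), by have := (y i).isLt; omega⟩
    else ⟨y i, by have := (y i).isLt; omega⟩

def glue {A : Type*} (N : ℕ) {d : ℕ} (f : (Fin d → Bool) → ((Fin d → Fin N) → A)) :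
    (Fin d → Fin (2*N-1)) → A :=
  fun x => f (epsPt N x) (foldPt N x)

lemma embedPt_val (N : ℕ) {d : ℕ} (ε : Fin d → Bool) (y : Fin d → Fin N) (i : Fin d) :
    (embedPt N ε y i : ℕ) = if ε i = true then 2*N-2-(y i : ℕ) else (y i : ℕ) := by
  simp only [embedPt]; split <;> rfl

lemma foldPt_val (N : ℕ) {d : ℕ} (x : Fin d → Fin (2*N-1)) (i : Fin d) :
    (foldPt N x i : ℕ) = if (x i : ℕ) < N then (x i : ℕ) else 2*N-2-(x i : ℕ) := by
  simp only [foldPt]; split <;> rfl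

lemma fold_embed (N : ℕ) {d : ℕ} (ε : Fin d → Bool) (y : Fin d → Fin N) :
    foldPt N (embedPt N ε y) = y := by
  funext i
  have hyi := (y i).isLt
  apply Fin.ext
  simp only [foldPt_val, embedPt_val]
  rcases hε : ε i with _ | _ <;> simp only [hε, Bool.false_eq_true, if_false, if_true] <;>
    split_ifs <;> omega

lemma eps_embed_ne (N : ℕ) {d : ℕ} (ε : Fin d → Bool) (y : Fin d → Fin N) (i : Fin d)
    (h : epsPt N (embedPt N ε y) i ≠ ε i) : (y i : ℕ) = N - 1 := by
  have hyi := (y i).isLt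
  have hv := embedPt_val N ε y i
  have he : epsPt N (embedPt N ε y) i = decide (N ≤ (embedPt N ε y i : ℕ)) := rfl
  rcases hε : ε i with _ | _
  · rw [hε] at h hv
    rw [he, hv] at h
    simp only [Bool.false_eq_true, if_false, ne_eq, decide_eq_false_iff_not, not_not] at h
    omega
  · rw [hε] at h hv
    rw [he, hv] at h
    simp only [if_true, ne_eq, decide_eq_true_eq] at h
    omega

/-- the value of the glued pattern at an embedded point -/
lemma glue_embed {A : Type*} (N : ℕ) {d : ℕ}
    (f : (Fin d → Bool) → ((Fin d → Fin N) → A))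
    (hf : ∀ ε ε' (y : Fin d → Fin N), (∃ i, (y i : ℕ) = N - 1) → f ε y = f ε' y)
    (ε : Fin d → Bool) (y : Fin d → Fin N) :
    glue N f (embedPt N ε y) = f ε y := by
  rw [glue, fold_embed]
  by_cases hεε : epsPt N (embedPt N ε y) = ε
  · rw [hεε]
  · obtain ⟨i, hi⟩ : ∃ i, epsPt N (embedPt N ε y) i ≠ ε i := by
      by_contra hc
      push_neg at hc
      exact hεε (funext hc)
    exact hf _ _ y ⟨i, eps_embed_ne N ε y i hi⟩

lemma glue_adm {A : Type*} {d : ℕ} {F : Fin d → Set (A × A)}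
    (hF : ∀ (i : Fin d) (a b : A), (a, b) ∈ F i ↔ (b, a) ∈ F i)
    (N : ℕ)
    (f : (Fin d → Bool) → ((Fin d → Fin N) → A))
    (hf : ∀ ε ε' (y : Fin d → Fin N), (∃ i, (y i : ℕ) = N - 1) → f ε y = f ε' y)
    (hadm : ∀ ε, IsLocAdm d N F (f ε)) :
    IsLocAdm d (2*N-1) F (glue N f) := by
  intro x k h
  set x' := Function.update x k (⟨(x k : ℕ) + 1, h⟩ : Fin (2*N-1)) with hx'def
  have hMk := (x k).isLt
  have hne : ∀ i, i ≠ k → x' i = x i := fun i hik => Function.update_of_ne hik _ _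
  have hx'k : (x' k : ℕ) = (x k : ℕ) + 1 := by simp [hx'def]
  have hgx : glue N f x = f (epsPt N x) (foldPt N x) := rfl
  have hgx' : glue N f x' = f (epsPt N x') (foldPt N x') := rfl
  show (glue N f x, glue N f x') ∉ F k
  rw [hgx, hgx']
  rcases Nat.lt_or_ge ((x k : ℕ) + 1) N with ha | hN1
  · -- both in lower block
    have hε : epsPt N x' = epsPt N x := by
      funext i
      rcases eq_or_ne i k with rfl | hik
      · show decide (N ≤ (x' i : ℕ)) = decide (N ≤ (x i : ℕ))
        rw [hx'k]
        exact decide_eq_decide.mpr (by omega)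
      · show decide (N ≤ (x' i : ℕ)) = decide (N ≤ (x i : ℕ))
        rw [hne i hik]
    have hyk : (foldPt N x k : ℕ) = (x k : ℕ) := by
      rw [foldPt_val, if_pos (by omega)]
    have hlt : (foldPt N x k : ℕ) + 1 < N := by omega
    have hy' : foldPt N x' = Function.update (foldPt N x) k ⟨(foldPt N x k : ℕ) + 1, hlt⟩ := by
      funext i
      rcases eq_or_ne i k with rfl | hik
      · apply Fin.ext
        rw [Function.update_self]
        show (foldPt N x' i : ℕ) = (foldPt N x i : ℕ) + 1
        rw [foldPt_val, hx'k, if_pos ha, hyk]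
      · apply Fin.ext
        rw [Function.update_of_ne hik]
        show (foldPt N x' i : ℕ) = (foldPt N x i : ℕ)
        rw [foldPt_val, foldPt_val, hne i hik]
    rw [hε, hy']
    exact hadm (epsPt N x) (foldPt N x) k hlt
  · rcases Nat.lt_or_ge (x k : ℕ) N with hc | hb
    · -- boundary crossing: x k = N-1
      have htk : (x k : ℕ) = N - 1 := by omega
      have hN2 : 2 ≤ N := by omega
      have hzk : (foldPt N x' k : ℕ) = N - 2 := by
        rw [foldPt_val, hx'k, if_neg (by omega)]
        omega
      have hlt : (foldPt N x' k : ℕ) + 1 < N := by omega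
      have hy : foldPt N x = Function.update (foldPt N x') k ⟨(foldPt N x' k : ℕ) + 1, hlt⟩ := by
        funext i
        rcases eq_or_ne i k with rfl | hik
        · apply Fin.ext
          rw [Function.update_self]
          show (foldPt N x i : ℕ) = (foldPt N x' i : ℕ) + 1
          rw [foldPt_val, if_pos hc, htk, hzk]
          omega
        · apply Fin.ext
          rw [Function.update_of_ne hik]
          show (foldPt N x i : ℕ) = (foldPt N x' i : ℕ)
          rw [foldPt_val, foldPt_val, hne i hik]
      have hvk : (foldPt N x k : ℕ) = N - 1 := by rw [foldPt_val, if_pos hc, htk]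
      have hval : f (epsPt N x') (foldPt N x) = f (epsPt N x) (foldPt N x) :=
        hf _ _ _ ⟨k, hvk⟩
      intro hm
      rw [hF] at hm
      apply hadm (epsPt N x') (foldPt N x') k hlt
      rw [← hy, hval]
      exact hm
    · -- both in upper block
      have hε : epsPt N x' = epsPt N x := by
        funext i
        rcases eq_or_ne i k with rfl | hik
        · show decide (N ≤ (x' i : ℕ)) = decide (N ≤ (x i : ℕ))
          rw [hx'k]
          exact decide_eq_decide.mpr (by omega)
        · show decide (N ≤ (x' i : ℕ)) = decide (N ≤ (x i : ℕ))
          rw [hne i hik]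
      have hzk : (foldPt N x' k : ℕ) = 2*N-2-((x k : ℕ)+1) := by
        rw [foldPt_val, hx'k, if_neg (by omega)]
      have hlt : (foldPt N x' k : ℕ) + 1 < N := by omega
      have hy : foldPt N x = Function.update (foldPt N x') k ⟨(foldPt N x' k : ℕ) + 1, hlt⟩ := by
        funext i
        rcases eq_or_ne i k with rfl | hik
        · apply Fin.ext
          rw [Function.update_self]
          show (foldPt N x i : ℕ) = (foldPt N x' i : ℕ) + 1
          rw [foldPt_val, if_neg (by omega), hzk]
          omega
        · apply Fin.ext
          rw [Function.update_of_ne hik]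
          show (foldPt N x i : ℕ) = (foldPt N x' i : ℕ)
          rw [foldPt_val, foldPt_val, hne i hik]
      intro hm
      rw [hF] at hm
      rw [hε] at hm
      apply hadm (epsPt N x) (foldPt N x') k hlt
      rw [← hy]
      exact hm

lemma nat_card_sigma {ι : Type*} [Fintype ι] (β : ι → Type*) [∀ i, Finite (β i)] :
    Nat.card (Σ i, β i) = ∑ i, Nat.card (β i) := by
  classical
  letI : ∀ i, Fintype (β i) := fun i => Fintype.ofFinite _
  rw [Nat.card_eq_fintype_card, Fintype.card_sigma]
  exact Finset.sum_congr rfl (fun i _ => (Nat.card_eq_fintype_card).symm)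

lemma card_boundary (N d : ℕ) (hN : 1 ≤ N) :
    Nat.card {y : Fin d → Fin N // ∃ i, (y i : ℕ) = N - 1} = N ^ d - (N - 1) ^ d := by
  classical
  have e : {y : Fin d → Fin N // ¬ ∃ i, (y i : ℕ) = N - 1} ≃ (Fin d → Fin (N - 1)) := by
    refine ⟨fun y i => ⟨y.1 i, ?_⟩, fun z => ⟨fun i => ⟨z i, by have := (z i).isLt; omega⟩, ?_⟩,
      ?_, ?_⟩
    · have h1 := (y.1 i).isLt
      have h2 := y.2
      push_neg at h2
      have := h2 i
      omega
    · push_neg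
      intro i
      have := (z i).isLt
      simp only [Fin.val_mk]
      omega
    · intro y
      ext i
      rfl
    · intro z
      funext i
      rfl
  rw [Nat.card_eq_fintype_card]
  have hc : Fintype.card {y : Fin d → Fin N // ¬ ∃ i, (y i : ℕ) = N - 1} = (N-1) ^ d := by
    rw [Fintype.card_congr e]
    simp
  have hcompl : Fintype.card {y : Fin d → Fin N // ¬ ∃ i, (y i : ℕ) = N - 1}
      = Fintype.card (Fin d → Fin N)
        - Fintype.card {y : Fin d → Fin N // ∃ i, (y i : ℕ) = N - 1} :=
    Fintype.card_subtype_compl _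
  have htot : Fintype.card (Fin d → Fin N) = N ^ d := by simp
  have hle : Fintype.card {y : Fin d → Fin N // ∃ i, (y i : ℕ) = N - 1}
      ≤ Fintype.card (Fin d → Fin N) := Fintype.card_subtype_le _
  clear e
  rw [hcompl, htot] at hc
  rw [htot] at hle
  rw [← hc, Nat.sub_sub_self hle]

set_option maxHeartbeats 1000000 in
lemma key_doubling {A : Type*} [Fintype A] {d : ℕ} {F : Fin d → Set (A × A)}
    (hF : ∀ (i : Fin d) (a b : A), (a, b) ∈ F i ↔ (b, a) ∈ F i) (N : ℕ) (hN : 1 ≤ N) :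
    patCount d F N ^ 2 ^ d ≤
      Fintype.card A ^ ((2 ^ d - 1) * (N ^ d - (N - 1) ^ d)) * patCount d F (2 * N - 1) := by
  classical
  let T := {y : Fin d → Fin N // ∃ i, (y i : ℕ) = N - 1}
  let Adm := {P : (Fin d → Fin N) → A // IsLocAdm d N F P}
  let tr : Adm → (T → A) := fun P => fun y => P.1 y.1
  let S : (T → A) → Type _ := fun τ => {P : Adm // tr P = τ}
  -- step 1 : patCount N = ∑ τ, card (S τ)
  have h1 : patCount d F N = ∑ τ : T → A, Nat.card (S τ) := by
    rw [patCount]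
    rw [← Nat.card_congr (Equiv.sigmaFiberEquiv tr)]
    exact nat_card_sigma _
  -- step 2 : injection into patterns of size 2N-1
  have h2 : ∑ τ : T → A, Nat.card (S τ) ^ 2 ^ d ≤ patCount d F (2 * N - 1) := by
    have hfprop : ∀ (τ : T → A) (g : (Fin d → Bool) → S τ),
        ∀ ε ε' (y : Fin d → Fin N), (∃ i, (y i : ℕ) = N - 1) →
          (g ε).1.1 y = (g ε').1.1 y := by
      intro τ g ε ε' y hy
      have e1 := congrFun (g ε).2 ⟨y, hy⟩
      have e2 := congrFun (g ε').2 ⟨y, hy⟩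
      exact e1.trans e2.symm
    let Φ : (Σ τ : T → A, ((Fin d → Bool) → S τ)) →
        {Q : (Fin d → Fin (2*N-1)) → A // IsLocAdm d (2*N-1) F Q} :=
      fun p => ⟨glue N (fun ε => (p.2 ε).1.1),
        glue_adm hF N _ (hfprop p.1 p.2) (fun ε => (p.2 ε).1.2)⟩
    have hinj : Function.Injective Φ := by
      intro a b hab
      obtain ⟨τ, g⟩ := a
      obtain ⟨τ', g'⟩ := b
      have hfun : glue N (fun ε => (g ε).1.1) = glue N (fun ε => (g' ε).1.1) :=
        congrArg Subtype.val hab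
      have hval : ∀ ε y, (g ε).1.1 y = (g' ε).1.1 y := by
        intro ε y
        rw [← glue_embed N _ (hfprop τ g) ε y, ← glue_embed N _ (hfprop τ' g') ε y, hfun]
      have hττ : τ = τ' := by
        funext y
        rw [← congrFun (g (fun _ => false)).2 y, ← congrFun (g' (fun _ => false)).2 y]
        exact hval _ y.1
      subst hττ
      have hg : g = g' := by
        funext ε
        exact Subtype.ext (Subtype.ext (funext (hval ε)))
      rw [hg]
    have hcard2 : Nat.card (Fin d → Bool) = 2 ^ d := by
      rw [Nat.card_eq_fintype_card]
      simp
    calc ∑ τ : T → A, Nat.card (S τ) ^ 2 ^ d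
        = ∑ τ : T → A, Nat.card ((Fin d → Bool) → S τ) := by
          refine Finset.sum_congr rfl (fun τ _ => ?_)
          rw [Nat.card_fun, hcard2]
      _ = Nat.card (Σ τ : T → A, ((Fin d → Bool) → S τ)) := (nat_card_sigma _).symm
      _ ≤ patCount d F (2*N-1) := by
          rw [patCount]
          exact Nat.card_le_card_of_injective Φ hinj
  -- step 3 : power mean
  have h3 : (∑ τ : T → A, Nat.card (S τ)) ^ 2 ^ d ≤
      Fintype.card (T → A) ^ (2 ^ d - 1) * ∑ τ : T → A, Nat.card (S τ) ^ 2 ^ d := by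
    have hch := pow_sum_le_card_mul_sum_pow
      (s := (Finset.univ : Finset (T → A))) (f := fun τ => (Nat.card (S τ) : ℕ))
      (fun i _ => Nat.zero_le _) (2 ^ d - 1)
    have h2d : 2 ^ d - 1 + 1 = 2 ^ d := by
      have : 1 ≤ 2 ^ d := Nat.one_le_two_pow
      omega
    rw [h2d] at hch
    rw [← Finset.card_univ]
    exact hch
  -- step 4 : card of trace space
  have h4 : Fintype.card (T → A) = Fintype.card A ^ (N ^ d - (N - 1) ^ d) := by
    rw [Fintype.card_fun]
    congr 1
    rw [← Nat.card_eq_fintype_card, card_boundary N d hN]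
  calc patCount d F N ^ 2 ^ d
      = (∑ τ : T → A, Nat.card (S τ)) ^ 2 ^ d := by rw [h1]
    _ ≤ Fintype.card (T → A) ^ (2 ^ d - 1) * ∑ τ : T → A, Nat.card (S τ) ^ 2 ^ d := h3
    _ ≤ Fintype.card (T → A) ^ (2 ^ d - 1) * patCount d F (2 * N - 1) :=
        Nat.mul_le_mul_left _ h2
    _ = Fintype.card A ^ ((2 ^ d - 1) * (N ^ d - (N - 1) ^ d)) * patCount d F (2 * N - 1) := by
        rw [h4, ← pow_mul, Nat.mul_comm (N ^ d - (N - 1) ^ d) (2 ^ d - 1)]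

lemma log_key {A : Type*} [Fintype A] [Nonempty A] {d : ℕ} {F : Fin d → Set (A × A)}
    (hF : ∀ (i : Fin d) (a b : A), (a, b) ∈ F i ↔ (b, a) ∈ F i)
    (h2 : 0 < patCount d F 2) (N : ℕ) (hN : 1 ≤ N) :
    ((2^d : ℕ) : ℝ) * Real.log (patCount d F N) ≤
      (((2^d - 1) * (N^d - (N-1)^d) : ℕ) : ℝ) * Real.log (Fintype.card A)
        + Real.log (patCount d F (2*N-1)) := by
  have hk : 0 < Fintype.card A := Fintype.card_pos
  have hposN : 0 < patCount d F N := patCount_pos d F hF h2 N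
  have hposM : 0 < patCount d F (2*N-1) := patCount_pos d F hF h2 (2*N-1)
  have h := key_doubling hF N hN
  have hcast : ((patCount d F N : ℝ))^(2^d) ≤
      (Fintype.card A : ℝ)^((2^d-1)*(N^d-(N-1)^d)) * (patCount d F (2*N-1) : ℝ) := by
    exact_mod_cast h
  have hlog := Real.log_le_log (by positivity) hcast
  rw [Real.log_pow, Real.log_mul (by positivity) (by positivity), Real.log_pow] at hlog
  exact_mod_cast hlog

lemma geom_aux (a b : ℝ) (hb : 0 < b) (hba : b < a) (J : ℕ) :
    ∑ j ∈ Finset.range J, b^j / a^(j+1) ≤ 1 / (a - b) := by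
  have ha0 : 0 < a := hb.trans hba
  have hrw : ∀ j ∈ Finset.range J, b^j/a^(j+1) = (1/a) * (b/a)^j := by
    intro j _
    rw [div_pow, pow_succ]
    field_simp
  rw [Finset.sum_congr rfl hrw, ← Finset.mul_sum]
  have hr1 : b/a < 1 := (div_lt_one ha0).2 hba
  have hr0 : 0 < b/a := by positivity
  have hgs : ∑ j ∈ Finset.range J, (b/a)^j ≤ 1/(1 - b/a) := by
    have he : ∑ j ∈ Finset.range J, (b/a)^j = (1 - (b/a)^J)/(1 - b/a) := by
      rw [geom_sum_eq (ne_of_lt hr1), ← neg_div_neg_eq]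
      ring_nf
    rw [he]
    have hpw : 0 ≤ (b/a)^J := by positivity
    have hpw : 0 ≤ (b/a)^J := by positivity
    exact (div_le_div_iff_of_pos_right (by linarith)).2 (by linarith)
  have h1a : 0 ≤ 1/a := by positivity
  calc (1/a) * ∑ j ∈ Finset.range J, (b/a)^j ≤ (1/a) * (1/(1-b/a)) :=
        mul_le_mul_of_nonneg_left hgs h1a
    _ = 1/(a-b) := by
        have hone : a * (1 - b/a) = a - b := by field_simp
        rw [div_mul_div_comm, one_mul, hone]

lemma sreal (d m : ℕ) : (((m+1)^d - m^d : ℕ) : ℝ)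
    = ∑ k ∈ Finset.range d, (d.choose k : ℝ) * (m:ℝ)^k := by
  have hle : m^d ≤ (m+1)^d := Nat.pow_le_pow_left (Nat.le_succ m) d
  rw [Nat.cast_sub hle]
  push_cast
  have hexp : ((m:ℝ)+1)^d = ∑ k ∈ Finset.range (d+1), (m:ℝ)^k * 1^(d-k) * (d.choose k) :=
    add_pow (m:ℝ) 1 d
  rw [hexp, Finset.sum_range_succ]
  simp only [one_pow, mul_one, Nat.choose_self, Nat.cast_one]
  rw [add_sub_cancel_right]
  exact Finset.sum_congr rfl (fun k _ => by ring)

open Filter in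
/-- if `C_2 > 0` and `L = lim (1/n^d) log C_n`, then for every `n ≥ 1`,
`(1/n^d)(log C_{n+1} − q_d(n) log |Σ|) ≤ L`. -/
theorem entropy_lower_bound
    {A : Type*} [Fintype A] [Nonempty A]
    (d : ℕ) (hd : 1 ≤ d) (F : Fin d → Set (A × A))
    (hF : ∀ (i : Fin d) (a b : A), (a, b) ∈ F i ↔ (b, a) ∈ F i)
    (h2 : 0 < patCount d F 2) (L : ℝ)
    (hL : Tendsto (fun n : ℕ => (1 / (n : ℝ) ^ d) * Real.log (patCount d F n)) atTop
      (nhds L)) :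
    ∀ n : ℕ, 1 ≤ n →
      (1 / (n : ℝ) ^ d) *
        (Real.log (patCount d F (n + 1)) - qReal d n * Real.log (Fintype.card A)) ≤ L := by
  intro n hn
  have hk : 0 < Fintype.card A := Fintype.card_pos
  set c := Real.log (Fintype.card A) with hc_def
  have hc : 0 ≤ c := Real.log_nonneg (by exact_mod_cast hk)
  set Nj : ℕ → ℕ := fun j => 2^j * n + 1 with hNj
  have hNj1 : ∀ j, 1 ≤ Nj j := fun j => Nat.le_add_left 1 _
  have hNjsucc : ∀ j, 2 * Nj j - 1 = Nj (j+1) := by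
    intro j
    simp only [hNj, pow_succ]
    ring_nf
    omega
  set B : ℕ → ℝ := fun j => Real.log (patCount d F (Nj j)) with hB
  set s : ℕ → ℕ := fun j => (Nj j)^d - (Nj j - 1)^d with hs
  have h2dR : (0:ℝ) < (2:ℝ)^d := by positivity
  have hstep : ∀ j, ((2^d : ℕ):ℝ) * B j ≤ (((2^d - 1) * s j : ℕ) : ℝ) * c + B (j+1) := by
    intro j
    have := log_key hF h2 (Nj j) (hNj1 j)
    rw [hNjsucc j] at this
    exact this
  set u : ℕ → ℝ := fun j => B j / ((2:ℝ)^d)^j with hu_def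
  set a : ℕ → ℝ := fun j => (((2^d - 1) * s j : ℕ) : ℝ) * c / ((2:ℝ)^d)^(j+1) with ha_def
  have hstep' : ∀ j, u j ≤ a j + u (j+1) := by
    intro j
    have hpow : (0:ℝ) < ((2:ℝ)^d)^(j+1) := by positivity
    have e1 : u j = (((2^d : ℕ):ℝ) * B j) / ((2:ℝ)^d)^(j+1) := by
      show B j / ((2:ℝ)^d)^j = _
      rw [pow_succ]
      push_cast
      field_simp
    have e2 : a j + u (j+1) = ((((2^d - 1) * s j : ℕ) : ℝ) * c + B (j+1)) / ((2:ℝ)^d)^(j+1) := by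
      show (((2^d - 1) * s j : ℕ) : ℝ) * c / ((2:ℝ)^d)^(j+1) + B (j+1) / ((2:ℝ)^d)^(j+1) = _
      rw [← add_div]
    rw [e1, e2]
    exact (div_le_div_iff_of_pos_right hpow).2 (hstep j)
  have hind : ∀ J, u 0 ≤ (∑ j ∈ Finset.range J, a j) + u J := by
    intro J
    induction J with
    | zero => simp
    | succ J ih =>
      rw [Finset.sum_range_succ]
      have := hstep' J
      linarith
  have ha_eq : ∀ j, a j = ∑ k ∈ Finset.range d,
      (((2:ℝ)^d - 1) * c * (d.choose k : ℝ) * (n:ℝ)^k) * (((2:ℝ)^k)^j / ((2:ℝ)^d)^(j+1)) := by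
    intro j
    have e : s j = ((2^j*n+1)^d - (2^j*n)^d : ℕ) := by
      show (Nj j)^d - (Nj j - 1)^d = _
      have h1 : Nj j = 2^j*n+1 := rfl
      have h2 : Nj j - 1 = 2^j*n := by rw [h1]; omega
      rw [h1, h2]
    have hsj : (s j : ℝ) = ∑ k ∈ Finset.range d, (d.choose k : ℝ) * ((2^j*n : ℕ):ℝ)^k := by
      rw [e, sreal d (2^j*n)]
    have hcast : (((2^d - 1) * s j : ℕ) : ℝ) = ((2:ℝ)^d - 1) * (s j : ℝ) := by
      push_cast [Nat.one_le_two_pow]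
      ring
    show (((2^d - 1) * s j : ℕ) : ℝ) * c / ((2:ℝ)^d)^(j+1) = _
    rw [hcast, hsj, Finset.mul_sum, Finset.sum_mul, Finset.sum_div]
    refine Finset.sum_congr rfl (fun k _ => ?_)
    have hppow : ((2:ℝ)^j * (n:ℝ))^k = ((2:ℝ)^k)^j * (n:ℝ)^k := by
      rw [mul_pow, ← pow_mul, ← pow_mul, Nat.mul_comm]
    push_cast
    rw [hppow]
    ring
  have hsum : ∀ J, ∑ j ∈ Finset.range J, a j ≤ qReal d (n:ℝ) * c := by
    intro J
    have hswap : ∑ j ∈ Finset.range J, a j = ∑ k ∈ Finset.range d,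
        (((2:ℝ)^d - 1) * c * (d.choose k : ℝ) * (n:ℝ)^k) *
          (∑ j ∈ Finset.range J, ((2:ℝ)^k)^j / ((2:ℝ)^d)^(j+1)) := by
      rw [Finset.sum_congr rfl (fun j _ => ha_eq j), Finset.sum_comm]
      exact Finset.sum_congr rfl (fun k _ => by rw [Finset.mul_sum])
    rw [hswap]
    have h2d1 : (1:ℝ) ≤ (2:ℝ)^d := one_le_pow₀ (by norm_num)
    have hterm : ∀ k ∈ Finset.range d,
        (((2:ℝ)^d - 1) * c * (d.choose k : ℝ) * (n:ℝ)^k) *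
            (∑ j ∈ Finset.range J, ((2:ℝ)^k)^j/((2:ℝ)^d)^(j+1))
          ≤ (((2:ℝ)^d - 1) * c * (d.choose k : ℝ) * (n:ℝ)^k) * (1/((2:ℝ)^d - (2:ℝ)^k)) := by
      intro k hk
      have hklt : k < d := Finset.mem_range.1 hk
      have hba : (2:ℝ)^k < (2:ℝ)^d := by
        exact pow_lt_pow_right₀ (by norm_num) hklt
      have hfac : 0 ≤ ((2:ℝ)^d - 1) * c * (d.choose k : ℝ) * (n:ℝ)^k :=
        mul_nonneg (mul_nonneg (mul_nonneg (by linarith) hc) (by positivity)) (by positivity)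
      exact mul_le_mul_of_nonneg_left (geom_aux _ _ (by positivity) hba J) hfac
    calc ∑ k ∈ Finset.range d, (((2:ℝ)^d - 1) * c * (d.choose k : ℝ) * (n:ℝ)^k) *
          (∑ j ∈ Finset.range J, ((2:ℝ)^k)^j / ((2:ℝ)^d)^(j+1))
        ≤ ∑ k ∈ Finset.range d, (((2:ℝ)^d - 1) * c * (d.choose k : ℝ) * (n:ℝ)^k) *
          (1/((2:ℝ)^d - (2:ℝ)^k)) := Finset.sum_le_sum hterm
      _ = qReal d (n:ℝ) * c := by
          rw [qReal, Finset.mul_sum, Finset.sum_mul]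
          exact Finset.sum_congr rfl (fun k _ => by ring)
  -- limits
  have hNjtend : Filter.Tendsto Nj Filter.atTop Filter.atTop := by
    apply Filter.tendsto_atTop_mono _ Filter.tendsto_id
    intro J
    show J ≤ Nj J
    have h1 : J < 2^J := Nat.lt_two_pow_self
    have h2 : 2^J ≤ 2^J * n := Nat.le_mul_of_pos_right _ hn
    show J ≤ 2^J * n + 1
    omega
  have hcomp : Filter.Tendsto (fun J => (1/((Nj J : ℕ):ℝ)^d) * Real.log (patCount d F (Nj J)))
      Filter.atTop (nhds L) := hL.comp hNjtend
  have hratio : Filter.Tendsto (fun J => ((Nj J : ℝ)/(2:ℝ)^J)) Filter.atTop (nhds (n:ℝ)) := by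
    have heq : (fun J => ((Nj J : ℝ)/(2:ℝ)^J)) = fun J => (n:ℝ) + ((1:ℝ)/2)^J := by
      funext J
      show ((2^J*n+1 : ℕ):ℝ)/(2:ℝ)^J = _
      have h2Jne : ((2:ℝ)^J) ≠ 0 := by positivity
      push_cast
      rw [div_pow]
      field_simp
      ring
    rw [heq]
    have h0 : Filter.Tendsto (fun J : ℕ => ((1:ℝ)/2)^J) Filter.atTop (nhds 0) :=
      tendsto_pow_atTop_nhds_zero_of_lt_one (by norm_num) (by norm_num)
    simpa using tendsto_const_nhds.add h0
  have hud : Filter.Tendsto u Filter.atTop (nhds ((n:ℝ)^d * L)) := by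
    have hprod := (hratio.pow d).mul hcomp
    have heq : (fun J => ((Nj J:ℝ)/(2:ℝ)^J)^d *
        ((1/((Nj J : ℕ):ℝ)^d) * Real.log (patCount d F (Nj J)))) = u := by
      funext J
      show _ = B J / ((2:ℝ)^d)^J
      have hNjpos : (0:ℝ) < ((Nj J : ℕ):ℝ) := by exact_mod_cast hNj1 J
      have h2Jne : ((2:ℝ)^J) ≠ 0 := by positivity
      have hBJ : B J = Real.log (patCount d F (Nj J)) := rfl
      rw [hBJ, div_pow, ← pow_mul, Nat.mul_comm J d, pow_mul]
      field_simp
    rw [← heq]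
    exact hprod
  have hu0 : u 0 = B 0 := by
    show B 0 / ((2:ℝ)^d)^0 = B 0
    simp
  have hfin : B 0 - qReal d (n:ℝ) * c ≤ (n:ℝ)^d * L := by
    apply ge_of_tendsto' hud
    intro J
    have h1 := hind J
    have h2 := hsum J
    rw [hu0] at h1
    linarith
  have hB0 : B 0 = Real.log (patCount d F (n+1)) := by
    show Real.log (patCount d F (Nj 0)) = _
    have : Nj 0 = n + 1 := by
      show 2^0*n+1 = n+1
      simp
    rw [this]
  have hnpos : (0:ℝ) < (n:ℝ) := by exact_mod_cast hn
  have hnd : (0:ℝ) < (n:ℝ)^d := by positivity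
  rw [one_div, inv_mul_le_iff₀ hnd]
  rw [← hB0]
  exact hfin
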